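/- For every n, there exists a compact set K₀ of n×n matrices over ℚ₂, all of which are invertible, such that every symmetric n×n matrix B over ℚ₂ whose determinant is a unit admits a matrix M ∈ K₀ with Mᵀ·B·M diagonal. That is, over ℚ₂ every non-degenerate quadratic form on ℚ₂ⁿ can be put into diagonal form by a base change taken from a fixed compact set of invertible matrices. -/

import Mathlib

open Matrix

namespace Stmt9Aux

lemma norm_sum_le_one {ι : Type*} (s : Finset ι) (f : ι → ℚ_[2]) (h : ∀ i ∈ s, ‖f i‖ ≤ 1) :
    ‖∑ i ∈ s, f i‖ ≤ 1 :=
  IsUltrametricDist.norm_sum_le_of_forall_le_of_nonneg zero_le_one h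

lemma dot_le_one {n : ℕ} (x y : Fin n → ℚ_[2]) (hx : ∀ i, ‖x i‖ ≤ 1) (hy : ∀ i, ‖y i‖ ≤ 1) :
    ‖x ⬝ᵥ y‖ ≤ 1 := by
  apply norm_sum_le_one
  intro i _
  calc ‖x i * y i‖ = ‖x i‖ * ‖y i‖ := norm_mul _ _
    _ ≤ 1 * 1 := mul_le_mul (hx i) (hy i) (norm_nonneg _) zero_le_one
    _ = 1 := one_mul 1

lemma mulVec_le_one {n : ℕ} (A : Matrix (Fin n) (Fin n) ℚ_[2]) (x : Fin n → ℚ_[2])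
    (hA : ∀ i j, ‖A i j‖ ≤ 1) (hx : ∀ i, ‖x i‖ ≤ 1) : ∀ i, ‖(A *ᵥ x) i‖ ≤ 1 :=
  fun i => dot_le_one (A i) x (hA i) hx

lemma triple_apply {n : ℕ} (P A Q : Matrix (Fin n) (Fin n) ℚ_[2]) (k l : Fin n) :
    (Pᵀ * A * Q) k l = (fun r => P r k) ⬝ᵥ (A *ᵥ fun r => Q r l) := by
  simp only [mul_apply, transpose_apply, mulVec, dotProduct, Finset.sum_mul, Finset.mul_sum]
  rw [Finset.sum_comm]
  exact Finset.sum_congr rfl fun r _ => Finset.sum_congr rfl fun s _ => by ring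

lemma norm4 : ‖(4 : ℚ_[2])‖ = 1/4 := by
  have h2 : ‖(2 : ℚ_[2])‖ = 2⁻¹ := by
    simpa using @Padic.norm_p 2 ⟨Nat.prime_two⟩
  have : (4:ℚ_[2]) = 2^2 := by norm_num
  rw [this, norm_pow, h2]; norm_num

lemma single_bilin {n : ℕ} (A : Matrix (Fin n) (Fin n) ℚ_[2]) (k l : Fin n) :
    (Pi.single k 1 : Fin n → ℚ_[2]) ⬝ᵥ (A *ᵥ Pi.single l 1) = A k l := by
  simp [mulVec_single, single_dotProduct]

lemma exists_good_vector (n : ℕ) (A : Matrix (Fin (n+1)) (Fin (n+1)) ℚ_[2])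
    (hsym : A.IsSymm) (i j : Fin (n+1)) (hij : ‖A i j‖ = 1) :
    ∃ (x : Fin (n+1) → ℚ_[2]) (i₀ : Fin (n+1)),
      (∀ k, ‖x k‖ ≤ 1) ∧ x i₀ = 1 ∧ (1/4 : ℝ) ≤ ‖x ⬝ᵥ (A *ᵥ x)‖ := by
  have hsingle : ∀ (a k : Fin (n+1)), ‖(Pi.single a 1 : Fin (n+1) → ℚ_[2]) k‖ ≤ 1 := by
    intro a k
    rcases eq_or_ne k a with rfl | h
    · simp
    · simp [Pi.single_eq_of_ne h]
  by_cases hij' : i = j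
  · subst hij'
    refine ⟨Pi.single i 1, i, hsingle i, Pi.single_eq_same i 1, ?_⟩
    rw [single_bilin, hij]
    norm_num
  · set u : Fin (n+1) → ℚ_[2] := Pi.single i 1 + Pi.single j 1 with hu
    set v : Fin (n+1) → ℚ_[2] := Pi.single i 1 - Pi.single j 1 with hv
    have hji : A j i = A i j := hsym.apply i j
    have hQu : u ⬝ᵥ (A *ᵥ u) = A i i + A i j + A j i + A j j := by
      simp only [hu, mulVec_add, dotProduct_add, add_dotProduct, single_bilin]
      ring
    have hQv : v ⬝ᵥ (A *ᵥ v) = A i i - A i j - A j i + A j j := by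
      simp only [hv, mulVec_sub, dotProduct_sub, sub_dotProduct, single_bilin]
      ring
    have hdiff : u ⬝ᵥ (A *ᵥ u) - v ⬝ᵥ (A *ᵥ v) = 4 * A i j := by
      rw [hQu, hQv, hji]; ring
    have hnd : ‖u ⬝ᵥ (A *ᵥ u) - v ⬝ᵥ (A *ᵥ v)‖ = 1/4 := by
      rw [hdiff, norm_mul, norm4, hij, mul_one]
    have hmax : (1/4 : ℝ) ≤ max ‖u ⬝ᵥ (A *ᵥ u)‖ ‖v ⬝ᵥ (A *ᵥ v)‖ := by
      rw [← hnd, sub_eq_add_neg]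
      simpa using Padic.nonarchimedean (u ⬝ᵥ (A *ᵥ u)) (-(v ⬝ᵥ (A *ᵥ v)))
    have hui : u i = 1 := by simp [hu, Pi.single_apply, hij']
    have hvi : v i = 1 := by simp [hv, Pi.single_apply, hij']
    have hun : ∀ k, ‖u k‖ ≤ 1 := by
      intro k
      calc ‖u k‖ ≤ max ‖(Pi.single i 1 : Fin (n+1) → ℚ_[2]) k‖ ‖(Pi.single j 1 : Fin (n+1) → ℚ_[2]) k‖ :=
            Padic.nonarchimedean _ _
        _ ≤ 1 := max_le (hsingle i k) (hsingle j k)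
    have hvn : ∀ k, ‖v k‖ ≤ 1 := by
      intro k
      have : v k = (Pi.single i 1 : Fin (n+1) → ℚ_[2]) k + (-((Pi.single j 1 : Fin (n+1) → ℚ_[2]) k)) := by
        simp [hv, sub_eq_add_neg]
      rw [this]
      calc _ ≤ max ‖(Pi.single i 1 : Fin (n+1) → ℚ_[2]) k‖ ‖-((Pi.single j 1 : Fin (n+1) → ℚ_[2]) k)‖ :=
            Padic.nonarchimedean _ _
        _ ≤ 1 := max_le (hsingle i k) (by rw [norm_neg]; exact hsingle j k)
    rcases le_max_iff.1 hmax with h | h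
    · exact ⟨u, i, hun, hui, h⟩
    · exact ⟨v, i, hvn, hvi, h⟩

lemma key : ∀ (n : ℕ) (B : Matrix (Fin n) (Fin n) ℚ_[2]), B.IsSymm → B.det ≠ 0 →
    (∀ i j, ‖B i j‖ ≤ 1) →
    ∃ M : Matrix (Fin n) (Fin n) ℚ_[2], (∀ i j, ‖M i j‖ ≤ 1) ∧
      ((1:ℝ)/4)^(n^2) ≤ ‖M.det‖ ∧ (Mᵀ * B * M).IsDiag := by
  intro n
  induction n with
  | zero =>
    intro B _ _ _
    refine ⟨1, fun i => Fin.elim0 i, by simp, fun i => Fin.elim0 i⟩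
  | succ n IH =>
    intro B hBsym hBdet hBn
    -- B ≠ 0
    have hB0 : B ≠ 0 := by
      intro h
      rw [h] at hBdet
      exact hBdet det_zero
    -- normalize
    obtain ⟨i, j, hij0⟩ : ∃ i j, B i j ≠ 0 := by
      by_contra h
      push_neg at h
      exact hB0 (Matrix.ext fun i j => h i j)
    obtain ⟨q, -, hq⟩ := Finset.exists_max_image (Finset.univ : Finset (Fin (n+1) × Fin (n+1)))
      (fun q => ‖B q.1 q.2‖) ⟨(i, j), Finset.mem_univ _⟩
    set c : ℚ_[2] := B q.1 q.2 with hc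
    have hcpos : 0 < ‖c‖ := lt_of_lt_of_le (norm_pos_iff.2 hij0) (hq (i, j) (Finset.mem_univ _))
    have hc0 : c ≠ 0 := norm_pos_iff.1 hcpos
    set A : Matrix (Fin (n+1)) (Fin (n+1)) ℚ_[2] := c⁻¹ • B with hA
    have hAsym : A.IsSymm := by
      rw [Matrix.IsSymm, hA, transpose_smul, hBsym]
    have hAn : ∀ k l, ‖A k l‖ ≤ 1 := by
      intro k l
      rw [hA, Matrix.smul_apply, smul_eq_mul, norm_mul, norm_inv]
      rw [inv_mul_le_iff₀ hcpos]
      simpa using hq (k, l) (Finset.mem_univ _)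
    have hAq : ‖A q.1 q.2‖ = 1 := by
      rw [hA, Matrix.smul_apply, smul_eq_mul, inv_mul_cancel₀ hc0, norm_one]
    have hAdet : A.det ≠ 0 := by
      rw [hA, det_smul]
      exact mul_ne_zero (pow_ne_zero _ (inv_ne_zero hc0)) hBdet
    -- find good vector
    obtain ⟨x, i₀, hxn, hxi₀, hxQ⟩ := exists_good_vector n A hAsym q.1 q.2 hAq
    set d : ℚ_[2] := x ⬝ᵥ (A *ᵥ x) with hd
    have hd4 : (1/4 : ℝ) ≤ ‖d‖ := hxQ
    have hd0 : d ≠ 0 := by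
      intro h
      rw [h, norm_zero] at hd4
      norm_num at hd4
    have hdn : ‖d‖ ≤ 1 := dot_le_one x _ hxn (mulVec_le_one A x hAn hxn)
    set cv : Fin (n+1) → ℚ_[2] := A *ᵥ x with hcv
    have hcvn : ∀ l, ‖cv l‖ ≤ 1 := mulVec_le_one A x hAn hxn
    set M₁ : Matrix (Fin (n+1)) (Fin (n+1)) ℚ_[2] :=
      Matrix.of fun k l => if l = i₀ then x k else d * (if k = l then 1 else 0) - cv l * x k
      with hM₁
    have hcoli₀ : (fun r => M₁ r i₀) = x := funext fun r => by simp [hM₁]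
    have hcol : ∀ l, l ≠ i₀ →
        (fun r => M₁ r l) = d • (Pi.single l 1 : Fin (n+1) → ℚ_[2]) - cv l • x := by
      intro l hl
      funext r
      simp [hM₁, hl, Pi.single_apply, smul_eq_mul]
    have hM₁n : ∀ k l, ‖M₁ k l‖ ≤ 1 := by
      intro k l
      rw [hM₁, Matrix.of_apply]
      by_cases hl : l = i₀
      · rw [if_pos hl]; exact hxn k
      · rw [if_neg hl, sub_eq_add_neg]
        refine le_trans (Padic.nonarchimedean _ _) (max_le ?_ ?_)
        · by_cases hkl : k = l
          · rw [if_pos hkl, mul_one]; exact hdn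
          · rw [if_neg hkl, mul_zero, norm_zero]; norm_num
        · rw [norm_neg, norm_mul]
          calc ‖cv l‖ * ‖x k‖ ≤ 1 * 1 :=
                mul_le_mul (hcvn l) (hxn k) (norm_nonneg _) zero_le_one
            _ = 1 := one_mul 1
    set C : Matrix (Fin (n+1)) (Fin (n+1)) ℚ_[2] := M₁ᵀ * A * M₁ with hC
    have hCapply : ∀ k l, C k l = (fun r => M₁ r k) ⬝ᵥ (A *ᵥ fun r => M₁ r l) :=
      fun k l => triple_apply M₁ A M₁ k l
    have hxA : x ᵥ* A = A *ᵥ x := by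
      have h := mulVec_transpose A x
      rw [hAsym] at h
      exact h.symm
    have hx_e : ∀ l, x ⬝ᵥ (A *ᵥ (Pi.single l 1 : Fin (n+1) → ℚ_[2])) = cv l := by
      intro l
      rw [dotProduct_mulVec, hxA, dotProduct_single, mul_one]
    have hCi₀i₀ : C i₀ i₀ = d := by
      rw [hCapply, hcoli₀]
    have hCi₀ : ∀ l, l ≠ i₀ → C i₀ l = 0 := by
      intro l hl
      rw [hCapply, hcoli₀, hcol l hl, mulVec_sub, mulVec_smul, mulVec_smul,
        dotProduct_sub, dotProduct_smul, dotProduct_smul, hx_e]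
      simp only [smul_eq_mul, ← hd]
      ring
    have hCsym : Cᵀ = C := by
      rw [hC, transpose_mul, transpose_mul, transpose_transpose, hAsym, ← mul_assoc]
    have hCli₀ : ∀ l, l ≠ i₀ → C l i₀ = 0 := by
      intro l hl
      have h := congrFun (congrFun hCsym i₀) l
      rw [transpose_apply] at h
      exact h.trans (hCi₀ l hl)
    have hCn : ∀ k l, ‖C k l‖ ≤ 1 := by
      intro k l
      rw [hCapply]
      exact dot_le_one _ _ (fun r => hM₁n r k) (mulVec_le_one A _ hAn (fun r => hM₁n r l))
    -- determinant of M₁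
    set vv : Fin (n+1) → ℚ_[2] := fun l => if l = i₀ then 0 else cv l with hvv
    set U : Matrix (Fin (n+1)) (Fin (n+1)) ℚ_[2] :=
      1 + Matrix.replicateCol Unit (Pi.single i₀ 1 : Fin (n+1) → ℚ_[2]) * Matrix.replicateRow Unit vv with hU
    have hdetU : U.det = 1 := by
      rw [hU, det_one_add_replicateCol_mul_replicateRow, dotProduct_single, mul_one, hvv]
      simp
    have hrowcol : ∀ (y z : Fin (n+1) → ℚ_[2]) k l,
        (Matrix.replicateCol Unit y * Matrix.replicateRow Unit z) k l = y k * z l := by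
      intro y z k l
      simp [Matrix.mul_apply]
    have hMU : M₁ * U = updateCol (d • (1 : Matrix (Fin (n+1)) (Fin (n+1)) ℚ_[2])) i₀ x := by
      rw [hU, mul_add, mul_one, ← Matrix.mul_assoc, ← replicateCol_mulVec]
      have h1 : M₁ *ᵥ (Pi.single i₀ 1) = x := by
        funext k
        simp [mulVec_single, hM₁]
      rw [h1]
      ext k l
      by_cases hl : l = i₀
      · subst hl
        rw [Matrix.add_apply, hrowcol, updateCol_self]
        simp [hM₁, hvv]
      · rw [Matrix.add_apply, hrowcol, updateCol_ne hl]
        simp only [hvv, if_neg hl, Matrix.smul_apply, one_apply, hM₁, Matrix.of_apply, smul_eq_mul]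
        ring
    have hdetM₁ : M₁.det = d ^ n := by
      have hdetN : (updateCol (d • (1 : Matrix (Fin (n+1)) (Fin (n+1)) ℚ_[2])) i₀ x).det
          = d ^ n * x i₀ := by
        rw [← cramer_apply, cramer_smul, cramer_one]
        simp
      have h2 : M₁.det * U.det = d ^ n * x i₀ := by
        rw [← det_mul, hMU, hdetN]
      rw [hdetU, mul_one, hxi₀, mul_one] at h2
      exact h2
    have hdetM₁0 : M₁.det ≠ 0 := by
      rw [hdetM₁]; exact pow_ne_zero _ hd0
    -- block decomposition
    set f : Fin (n+1) ≃ (Fin n ⊕ Unit) :=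
      (finSuccEquiv' i₀).trans (Equiv.optionEquivSumPUnit (Fin n)) with hf
    have hfs : ∀ a : Fin n, f.symm (Sum.inl a) = i₀.succAbove a := by
      intro a
      simp [hf, finSuccEquiv'_symm_some]
    have hfsr : f.symm (Sum.inr Unit.unit) = i₀ := by
      simp [hf, finSuccEquiv'_symm_none]
    set B₁ : Matrix (Fin n) (Fin n) ℚ_[2] :=
      Matrix.of fun a b => C (i₀.succAbove a) (i₀.succAbove b) with hB₁
    set Dd : Matrix Unit Unit ℚ_[2] := Matrix.of fun _ _ => d with hDd
    have hC' : C.submatrix f.symm f.symm = fromBlocks B₁ 0 0 Dd := by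
      ext a b
      rcases a with a | a <;> rcases b with b | b
      · rw [submatrix_apply, hfs, hfs]
        rfl
      · rw [submatrix_apply, hfs]
        cases b
        rw [hfsr]
        have := hCli₀ (i₀.succAbove a) (Fin.succAbove_ne i₀ a)
        simpa [fromBlocks] using this
      · rw [submatrix_apply, hfs]
        cases a
        rw [hfsr]
        have := hCi₀ (i₀.succAbove b) (Fin.succAbove_ne i₀ b)
        simpa [fromBlocks] using this
      · cases a; cases b
        rw [submatrix_apply, hfsr]
        simpa [fromBlocks, hDd] using hCi₀i₀
    have hdetC : C.det = M₁.det * A.det * M₁.det := by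
      rw [hC, det_mul, det_mul, det_transpose]
    have hdetC0 : C.det ≠ 0 := by
      rw [hdetC]
      exact mul_ne_zero (mul_ne_zero hdetM₁0 hAdet) hdetM₁0
    have hdetC' : B₁.det * d = C.det := by
      have h1 := det_submatrix_equiv_self f.symm C
      rw [hC', det_fromBlocks_zero₂₁] at h1
      have hDdet : Dd.det = d := by
        rw [det_unique]
        rfl
      rw [hDdet] at h1
      exact h1
    have hB₁det : B₁.det ≠ 0 := by
      intro h
      rw [h, zero_mul] at hdetC'
      exact hdetC0 hdetC'.symm
    have hB₁sym : B₁.IsSymm := by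
      apply Matrix.ext
      intro a b
      rw [transpose_apply, hB₁, Matrix.of_apply, Matrix.of_apply]
      have h := congrFun (congrFun hCsym (i₀.succAbove a)) (i₀.succAbove b)
      rw [transpose_apply] at h
      exact h
    have hB₁n : ∀ a b, ‖B₁ a b‖ ≤ 1 := fun a b => hCn _ _
    obtain ⟨M₂, hM₂n, hM₂det, hM₂diag⟩ := IH B₁ hB₁sym hB₁det hB₁n
    set M₃' : Matrix (Fin n ⊕ Unit) (Fin n ⊕ Unit) ℚ_[2] :=
      fromBlocks M₂ 0 0 1 with hM₃'
    set M₃ : Matrix (Fin (n+1)) (Fin (n+1)) ℚ_[2] := M₃'.submatrix f f with hM₃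
    have hM₃n : ∀ k l, ‖M₃ k l‖ ≤ 1 := by
      intro k l
      rw [hM₃, submatrix_apply]
      rcases hfk : f k with a | a <;> rcases hfl : f l with b | b
      · simpa [hM₃', fromBlocks] using hM₂n a b
      · simp [hM₃', fromBlocks]
      · simp [hM₃', fromBlocks]
      · simp [hM₃', fromBlocks, Matrix.one_apply]
    set M : Matrix (Fin (n+1)) (Fin (n+1)) ℚ_[2] := M₁ * M₃ with hM
    have hdetM₃ : M₃.det = M₂.det := by
      rw [hM₃, det_submatrix_equiv_self, hM₃', det_fromBlocks_zero₂₁, det_one, mul_one]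
    refine ⟨M, ?_, ?_, ?_⟩
    · intro k l
      rw [hM, mul_apply]
      apply norm_sum_le_one
      intro s _
      rw [norm_mul]
      calc ‖M₁ k s‖ * ‖M₃ s l‖ ≤ 1 * 1 :=
            mul_le_mul (hM₁n k s) (hM₃n s l) (norm_nonneg _) zero_le_one
        _ = 1 := one_mul 1
    · rw [hM, det_mul, hdetM₁, hdetM₃, norm_mul, norm_pow]
      have hstep : ((1:ℝ)/4)^(n^2 + n) ≤ ‖d‖ ^ n * ‖M₂.det‖ := by
        rw [pow_add]
        rw [mul_comm (((1:ℝ)/4)^(n^2)) _]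
        apply mul_le_mul
        · exact pow_le_pow_left₀ (by norm_num) hd4 n
        · exact hM₂det
        · positivity
        · positivity
      refine le_trans ?_ hstep
      apply pow_le_pow_of_le_one (by norm_num) (by norm_num)
      nlinarith
    · -- diagonality
      have hBA : B = c • A := by
        rw [hA, smul_smul, mul_inv_cancel₀ hc0, one_smul]
      have hMBM : Mᵀ * B * M = c • (M₃ᵀ * C * M₃) := by
        have e1 : Mᵀ * B * M = c • (Mᵀ * A * M) := by
          rw [hBA, Matrix.mul_smul, Matrix.smul_mul]
        have e2 : Mᵀ * A * M = M₃ᵀ * C * M₃ := by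
          rw [hM, transpose_mul, hC]
          simp only [Matrix.mul_assoc]
        rw [e1, e2]
      rw [hMBM]
      apply Matrix.IsDiag.smul
      have hCsub : C = (fromBlocks B₁ 0 0 Dd).submatrix f f := by
        rw [← hC', submatrix_submatrix, Equiv.symm_comp_self, submatrix_id_id]
      have hM₃T : M₃ᵀ = M₃'ᵀ.submatrix f f := by
        rw [hM₃, transpose_submatrix]
      rw [hM₃T, hCsub, hM₃, submatrix_mul_equiv, submatrix_mul_equiv]
      refine Matrix.IsDiag.submatrix ?_ f.injective
      have hinner : M₃'ᵀ * fromBlocks B₁ 0 0 Dd * M₃'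
          = fromBlocks (M₂ᵀ * B₁ * M₂) 0 0 Dd := by
        rw [hM₃', fromBlocks_transpose, fromBlocks_multiply, fromBlocks_multiply]
        simp [Matrix.mul_assoc]
      rw [hinner, isDiag_fromBlocks_iff]
      exact ⟨hM₂diag, rfl, rfl, fun a b hab => absurd (Subsingleton.elim a b) hab⟩

end Stmt9Aux

/-- Over `ℚ₂` (residual characteristic 2, characteristic 0) there is a fixed compact set of
invertible matrices from which a diagonalizing base change can be taken for every symmetric
matrix with unit determinant. -/
theorem stmt9 (n : ℕ) :
    ∃ K₀ : Set (Matrix (Fin n) (Fin n) ℚ_[2]),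
      IsCompact K₀ ∧ (∀ M ∈ K₀, IsUnit M.det) ∧
      ∀ B : Matrix (Fin n) (Fin n) ℚ_[2], B.IsSymm → IsUnit B.det →
        ∃ M ∈ K₀, (Mᵀ * B * M).IsDiag := by
  set ε : ℝ := ((1:ℝ)/4)^(n^2) with hε
  have hεpos : (0:ℝ) < ε := by positivity
  refine ⟨{M : Matrix (Fin n) (Fin n) ℚ_[2] | (∀ i j, ‖M i j‖ ≤ 1) ∧ ε ≤ ‖M.det‖}, ?_, ?_, ?_⟩
  · -- compactness
    have hball : IsCompact (Metric.closedBall (0:ℚ_[2]) 1) := isCompact_closedBall _ _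
    have hP : IsCompact {M : Matrix (Fin n) (Fin n) ℚ_[2] | ∀ i j, ‖M i j‖ ≤ 1} := by
      have he : {M : Matrix (Fin n) (Fin n) ℚ_[2] | ∀ i j, ‖M i j‖ ≤ 1}
          = Set.univ.pi (fun _ : Fin n => Set.univ.pi fun _ : Fin n =>
              Metric.closedBall (0:ℚ_[2]) 1) := by
        ext M
        constructor
        · intro h
          exact Set.mem_univ_pi.2 fun i => Set.mem_univ_pi.2 fun j => by
            simpa [Metric.mem_closedBall, dist_zero_right] using h i j
        · intro h i j
          have := Set.mem_univ_pi.1 (Set.mem_univ_pi.1 h i) j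
          simpa [Metric.mem_closedBall, dist_zero_right] using this
      rw [he]
      exact isCompact_univ_pi fun _ => isCompact_univ_pi fun _ => hball
    apply hP.of_isClosed_subset ?_ (fun M hM => hM.1)
    have hcont : ∀ i j : Fin n, Continuous fun M : Matrix (Fin n) (Fin n) ℚ_[2] => ‖M i j‖ :=
      fun i j => ((continuous_apply j).comp (continuous_apply i)).norm
    have h1 : IsClosed {M : Matrix (Fin n) (Fin n) ℚ_[2] | ∀ i j, ‖M i j‖ ≤ 1} := by
      have : {M : Matrix (Fin n) (Fin n) ℚ_[2] | ∀ i j, ‖M i j‖ ≤ 1}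
          = ⋂ i, ⋂ j, (fun M : Matrix (Fin n) (Fin n) ℚ_[2] => ‖M i j‖) ⁻¹' Set.Iic 1 := by
        ext M; simp
      rw [this]
      exact isClosed_iInter fun i => isClosed_iInter fun j =>
        (isClosed_Iic).preimage (hcont i j)
    have h2 : IsClosed {M : Matrix (Fin n) (Fin n) ℚ_[2] | ε ≤ ‖M.det‖} :=
      (isClosed_Ici).preimage (Continuous.matrix_det continuous_id).norm
    exact h1.inter h2
  · -- invertibility
    intro M hM
    refine isUnit_iff_ne_zero.2 fun h => ?_
    have h2 := hM.2
    rw [h, norm_zero] at h2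
    linarith
  · -- diagonalization
    intro B hBsym hBdet
    have hdet0 : B.det ≠ 0 := hBdet.ne_zero
    by_cases hB : B = 0
    · obtain ⟨M, hMn, hMdet, hMdiag⟩ := Stmt9Aux.key n B hBsym hdet0
        (by intro i j; rw [hB]; simp)
      exact ⟨M, ⟨hMn, hMdet⟩, hMdiag⟩
    · obtain ⟨i, j, hij0⟩ : ∃ i j, B i j ≠ 0 := by
        by_contra h
        push_neg at h
        exact hB (Matrix.ext fun i j => h i j)
      obtain ⟨q, -, hq⟩ := Finset.exists_max_image (Finset.univ : Finset (Fin n × Fin n))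
        (fun q => ‖B q.1 q.2‖) ⟨(i, j), Finset.mem_univ _⟩
      set c : ℚ_[2] := B q.1 q.2 with hc
      have hcpos : 0 < ‖c‖ := lt_of_lt_of_le (norm_pos_iff.2 hij0) (hq (i, j) (Finset.mem_univ _))
      have hc0 : c ≠ 0 := norm_pos_iff.1 hcpos
      set A : Matrix (Fin n) (Fin n) ℚ_[2] := c⁻¹ • B with hA
      have hAsym : A.IsSymm := by
        rw [Matrix.IsSymm, hA, transpose_smul, hBsym]
      have hAn : ∀ k l, ‖A k l‖ ≤ 1 := by
        intro k l
        rw [hA, Matrix.smul_apply, smul_eq_mul, norm_mul, norm_inv]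
        rw [inv_mul_le_iff₀ hcpos]
        simpa using hq (k, l) (Finset.mem_univ _)
      have hAdet : A.det ≠ 0 := by
        rw [hA, det_smul]
        exact mul_ne_zero (pow_ne_zero _ (inv_ne_zero hc0)) hdet0
      obtain ⟨M, hMn, hMdet, hMdiag⟩ := Stmt9Aux.key n A hAsym hAdet hAn
      refine ⟨M, ⟨hMn, hMdet⟩, ?_⟩
      have hBA : B = c • A := by
        rw [hA, smul_smul, mul_inv_cancel₀ hc0, one_smul]
      rw [hBA, Matrix.mul_smul, Matrix.smul_mul]
      exact hMdiag.smul c
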